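/- Fix j ≥ 1, let T_j = M_j(π/4), let w_j ∈ ℝ^{2^j} be the vector with all entries 2^{−j/2}, set D_j(v,v) = ⟨v, w_j⟩ T_j v, and let a_j = 1/(j·2^{j/2}). Then sup{ |(D_j(v,v))₁| : v ∈ ℝ^{2^j}, |v_m| ≤ a_j for all m } = 1/j², and for every k with 2 ≤ k ≤ 2^j, sup{ |(D_j(v,v))_k| : v ∈ ℝ^{2^j}, |v_m| ≤ a_j for all m } = 1/(4j²). -/

import Mathlib

/-- The equivalence `Fin 2^j ⊕ Fin 2^j ≃ Fin 2^(j+1)` used to assemble block matrices. -/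
def pe (j : ℕ) : Fin (2 ^ j) ⊕ Fin (2 ^ j) ≃ Fin (2 ^ (j + 1)) :=
  finSumFinEquiv.trans (finCongr (by rw [pow_succ, mul_two] : (2 : ℕ) ^ (j + 1) = 2 ^ j + 2 ^ j).symm)

/-- The matrices `M_j(θ)`: `M_1(θ) = [[cos θ, sin θ], [sin θ, −cos θ]]` and
`M_{j+1}(θ)` is built from `M_j(θ)` in 2×2 block form. (`M_0` is a dummy value;
all statements concern `j ≥ 1`.) -/
noncomputable def Mmat (θ : ℝ) : (j : ℕ) → Matrix (Fin (2 ^ j)) (Fin (2 ^ j)) ℝ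
  | 0 => 1
  | 1 => Matrix.of ![![Real.cos θ, Real.sin θ], ![Real.sin θ, -Real.cos θ]]
  | (j + 2) => Matrix.reindex (pe (j + 1)) (pe (j + 1))
      (Matrix.fromBlocks
        (Real.cos θ • Mmat θ (j + 1)) (Real.sin θ • Mmat θ (j + 1))
        (Real.sin θ • Mmat θ (j + 1)) ((-Real.cos θ) • Mmat θ (j + 1)))


noncomputable def cc (j : ℕ) : ℝ := (2:ℝ) ^ (-(j:ℝ)/2)

lemma cc_pos (j : ℕ) : 0 < cc j := Real.rpow_pos_of_pos two_pos _

lemma cc_succ (j : ℕ) : cc (j+1) = cc 1 * cc j := by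
  unfold cc
  rw [← Real.rpow_add two_pos]
  push_cast
  ring_nf

lemma cc_one : cc 1 = Real.cos (Real.pi/4) := by
  have h2 : Real.sqrt 2 * Real.sqrt 2 = 2 := Real.mul_self_sqrt (by norm_num)
  have hs : (0:ℝ) < Real.sqrt 2 := Real.sqrt_pos.mpr (by norm_num)
  rw [Real.cos_pi_div_four]
  unfold cc
  rw [show -(1:ℕ)/2 = -(1/2 : ℝ) by push_cast; ring, Real.rpow_neg (by norm_num),
    ← Real.sqrt_eq_rpow]
  field_simp
  rw [sq, h2]


lemma pe_zero (j : ℕ) : (pe j) (Sum.inl ⟨0, by positivity⟩) = ⟨0, by positivity⟩ := by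
  apply Fin.ext
  simp [pe, finSumFinEquiv]

lemma sin_pi4 : Real.sin (Real.pi/4) = Real.cos (Real.pi/4) := by
  rw [Real.sin_pi_div_four, Real.cos_pi_div_four]

lemma Mprops (j : ℕ) (hj : 1 ≤ j) :
    (∀ m, Mmat (Real.pi/4) j ⟨0, by positivity⟩ m = cc j) ∧
    (∀ k m, Mmat (Real.pi/4) j k m = cc j ∨ Mmat (Real.pi/4) j k m = -cc j) ∧
    (∀ k, k ≠ (⟨0, by positivity⟩ : Fin (2^j)) → ∑ m, Mmat (Real.pi/4) j k m = 0) := by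
  induction j, hj using Nat.le_induction with
  | base =>
    refine ⟨?_, ?_, ?_⟩
    · intro m
      fin_cases m <;> simp [Mmat, cc_one, sin_pi4]
    · intro k m
      fin_cases k <;> fin_cases m <;> simp [Mmat, cc_one, sin_pi4] <;> tauto
    · intro k hk
      fin_cases k
      · exact absurd rfl hk
      · simp [Mmat, Fin.sum_univ_two, sin_pi4]
  | succ n hn ih =>
    obtain ⟨IH0, IHpm, IHsum⟩ := ih
    obtain ⟨p, rfl⟩ : ∃ p, n = p + 1 := ⟨n - 1, (Nat.succ_pred_eq_of_pos hn).symm⟩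
    set e := pe (p+1) with he
    have hME : ∀ k m, Mmat (Real.pi/4) (p+1+1) k m =
        (Matrix.fromBlocks
          (Real.cos (Real.pi/4) • Mmat (Real.pi/4) (p+1))
          (Real.sin (Real.pi/4) • Mmat (Real.pi/4) (p+1))
          (Real.sin (Real.pi/4) • Mmat (Real.pi/4) (p+1))
          ((-Real.cos (Real.pi/4)) • Mmat (Real.pi/4) (p+1)))
          (e.symm k) (e.symm m) := by
      intro k m
      simp [Mmat, Matrix.reindex_apply, Matrix.submatrix_apply, he]
    have h0 : e.symm ⟨0, by positivity⟩ = Sum.inl ⟨0, by positivity⟩ := by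
      rw [Equiv.symm_apply_eq]; exact (pe_zero (p+1)).symm
    have key : ∀ (s x : ℝ),
        (s = Real.cos (Real.pi/4) ∨ s = Real.sin (Real.pi/4) ∨ s = -Real.cos (Real.pi/4)) →
        (x = cc (p+1) ∨ x = -cc (p+1)) →
        (s * x = cc (p+1+1) ∨ s * x = -cc (p+1+1)) := by
      intro s x hs hx
      rw [cc_succ (p+1)]
      rcases hs with h|h|h <;> rcases hx with h'|h' <;> subst h <;> subst h' <;>
        simp only [cc_one, sin_pi4] <;> ring_nf <;> tauto
    refine ⟨?_, ?_, ?_⟩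
    · intro m
      rw [hME, h0]
      rcases hsm : e.symm m with i | i
      · rw [Matrix.fromBlocks_apply₁₁]
        simp [Matrix.smul_apply, IH0 i, cc_succ (p+1), cc_one]
        exact IH0 i
      · rw [Matrix.fromBlocks_apply₁₂]
        simp [Matrix.smul_apply, IH0 i, cc_succ (p+1), cc_one, sin_pi4]
        exact IH0 i
    · intro k m
      rw [hME]
      rcases e.symm k with i | i <;> rcases e.symm m with i' | i'
      · rw [Matrix.fromBlocks_apply₁₁]
        exact key _ _ (Or.inl rfl) (IHpm i i')
      · rw [Matrix.fromBlocks_apply₁₂]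
        exact key _ _ (Or.inr (Or.inl rfl)) (IHpm i i')
      · rw [Matrix.fromBlocks_apply₂₁]
        exact key _ _ (Or.inr (Or.inl rfl)) (IHpm i i')
      · rw [Matrix.fromBlocks_apply₂₂]
        exact key _ _ (Or.inr (Or.inr rfl)) (IHpm i i')
    · intro k hk
      have hsplit : ∑ m, Mmat (Real.pi/4) (p+1+1) k m
          = ∑ i : Fin (2^(p+1)) ⊕ Fin (2^(p+1)), Mmat (Real.pi/4) (p+1+1) k (e i) :=
        (Equiv.sum_comp e _).symm
      rw [hsplit, Fintype.sum_sum_type]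
      rcases hek : e.symm k with i | i
      · have hi : i ≠ ⟨0, by positivity⟩ := by
          intro h
          apply hk
          have hki : k = e (Sum.inl i) := by
            rw [← hek, Equiv.apply_symm_apply]
          rw [hki, h]
          exact pe_zero (p+1)
        simp only [hME, hek, Equiv.symm_apply_apply, Matrix.fromBlocks_apply₁₁,
          Matrix.fromBlocks_apply₁₂, Matrix.smul_apply, smul_eq_mul]
        rw [← Finset.mul_sum, ← Finset.mul_sum, IHsum i hi]
        ring
      · simp only [hME, hek, Equiv.symm_apply_apply, Matrix.fromBlocks_apply₂₁,
          Matrix.fromBlocks_apply₂₂, Matrix.smul_apply, smul_eq_mul]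
        rw [← Finset.mul_sum, ← Finset.mul_sum, sin_pi4]
        ring

set_option maxHeartbeats 1000000 in
/-- For `j ≥ 1`, `T_j = M_j(π/4)`, `w_j` the vector with all
entries `2^{−j/2}`, `D_j(v,v) = ⟨v, w_j⟩ T_j v` and `a_j = 1/(j·2^{j/2})`:
the sup over `{v : |v_m| ≤ a_j}` of the first component of `|D_j(v,v)|` equals
`1/j²`, and of every other component equals `1/(4j²)`. -/
theorem stmt16 (j : ℕ) (hj : 1 ≤ j) :
    sSup {y : ℝ | ∃ v : Fin (2 ^ j) → ℝ,
        (∀ m, |v m| ≤ 1 / ((j : ℝ) * (2 : ℝ) ^ ((j : ℝ) / 2))) ∧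
        y = |(∑ m, v m * (2 : ℝ) ^ (-(j : ℝ) / 2))
              * (Mmat (Real.pi / 4) j).mulVec v ⟨0, by positivity⟩|}
      = 1 / (j : ℝ) ^ 2 ∧
    ∀ k : Fin (2 ^ j), k ≠ ⟨0, by positivity⟩ →
      sSup {y : ℝ | ∃ v : Fin (2 ^ j) → ℝ,
          (∀ m, |v m| ≤ 1 / ((j : ℝ) * (2 : ℝ) ^ ((j : ℝ) / 2))) ∧
          y = |(∑ m, v m * (2 : ℝ) ^ (-(j : ℝ) / 2))
                * (Mmat (Real.pi / 4) j).mulVec v k|}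
        = 1 / (4 * (j : ℝ) ^ 2) := by
  classical
  obtain ⟨H0, Hpm, Hsum⟩ := Mprops j hj
  have hj0 : (0:ℝ) < (j:ℝ) := by exact_mod_cast hj
  set c : ℝ := (2:ℝ) ^ (-(j:ℝ)/2) with hc
  have hccj : cc j = c := rfl
  have hcpos : 0 < c := Real.rpow_pos_of_pos two_pos _
  have hcc2 : c * c = (2:ℝ) ^ (-(j:ℝ)) := by
    rw [hc, ← Real.rpow_add two_pos]
    congr 1; ring
  have hkey : (2:ℝ)^(j:ℕ) * (c*c) = 1 := by
    rw [hcc2, ← Real.rpow_natCast 2 j, ← Real.rpow_add two_pos]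
    simp
  set a : ℝ := c / (j:ℝ) with haa
  have hapos : 0 < a := by positivity
  have ha : (1:ℝ)/((j:ℝ) * (2:ℝ)^((j:ℝ)/2)) = a := by
    rw [haa, hc, neg_div, Real.rpow_neg two_pos.le]
    have hx : (0:ℝ) < (2:ℝ)^((j:ℝ)/2) := Real.rpow_pos_of_pos two_pos _
    field_simp
  have hmv : ∀ (v : Fin (2^j) → ℝ) (k : Fin (2^j)),
      (Mmat (Real.pi/4) j).mulVec v k = ∑ m, Mmat (Real.pi/4) j k m * v m := fun v k => rfl
  have hcard : ((Finset.univ : Finset (Fin (2^j))).card : ℝ) = (2:ℝ)^(j:ℕ) := by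
    rw [Finset.card_univ, Fintype.card_fin]; push_cast; ring
  have hval : ((2:ℝ)^(j:ℕ)) * (a * c) = 1/(j:ℝ) := by
    rw [haa]
    field_simp
    nlinarith [hkey]
  constructor
  · apply IsGreatest.csSup_eq
    constructor
    · refine ⟨fun _ => a, fun m => by rw [ha, abs_of_pos hapos], ?_⟩
      rw [hmv]
      simp only [H0, hccj]
      rw [Finset.sum_const, Finset.sum_const, nsmul_eq_mul, nsmul_eq_mul, hcard]
      have h1 : (2:ℝ)^(j:ℕ) * (a * c) = 1/(j:ℝ) := hval
      have h2 : (2:ℝ)^(j:ℕ) * (c * a) = 1/(j:ℝ) := by rw [← h1]; ring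
      rw [h1, h2, abs_of_pos (by positivity)]
      field_simp
    · rintro y ⟨v, hv, rfl⟩
      simp only [ha] at hv
      rw [hmv]
      simp only [H0, hccj]
      rw [← Finset.sum_mul, ← Finset.mul_sum]
      set s : ℝ := ∑ m, v m with hs
      have hsb : |s| ≤ (2:ℝ)^(j:ℕ) * a := by
        calc |s| ≤ ∑ m, |v m| := Finset.abs_sum_le_sum_abs _ _
          _ ≤ ∑ _m : Fin (2^j), a := Finset.sum_le_sum (fun m _ => hv m)
          _ = (2:ℝ)^(j:ℕ) * a := by rw [Finset.sum_const, nsmul_eq_mul, hcard]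
      have h1 : |s * c * (c * s)| = (c * |s|)^2 := by
        rw [show s * c * (c * s) = (c*s)^2 by ring, abs_of_nonneg (sq_nonneg (c*s)),
          mul_pow, mul_pow, sq_abs]
      rw [h1]
      have h2 : c * |s| ≤ c * ((2:ℝ)^(j:ℕ) * a) := by
        exact mul_le_mul_of_nonneg_left hsb hcpos.le
      have h3 : c * ((2:ℝ)^(j:ℕ) * a) = 1/(j:ℝ) := by rw [← hval]; ring
      have h4 : (0:ℝ) ≤ c * |s| := by positivity
      calc (c * |s|)^2 ≤ (1/(j:ℝ))^2 := by nlinarith [h2, h3, h4]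
        _ = 1/(j:ℝ)^2 := by rw [div_pow]; norm_num
  · intro k hk
    apply IsGreatest.csSup_eq
    set Sk : Finset (Fin (2^j)) := Finset.univ.filter (fun m => Mmat (Real.pi/4) j k m = c)
      with hSk
    have hmem : ∀ m ∈ Sk, Mmat (Real.pi/4) j k m = c := by
      intro m hm; exact (Finset.mem_filter.mp hm).2
    have hmem' : ∀ m ∈ Finset.univ.filter (fun m => ¬ Mmat (Real.pi/4) j k m = c),
        Mmat (Real.pi/4) j k m = -c := by
      intro m hm
      rcases Hpm k m with h | h
      · exact absurd (h.trans hccj) (Finset.mem_filter.mp hm).2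
      · rw [h, hccj]
    set n1 : ℕ := Sk.card with hn1
    set n2 : ℕ := (Finset.univ.filter (fun m => ¬ Mmat (Real.pi/4) j k m = c)).card with hn2
    have hnn : (n1:ℝ) + (n2:ℝ) = (2:ℝ)^(j:ℕ) := by
      have h := Finset.card_filter_add_card_filter_not
        (s := (Finset.univ : Finset (Fin (2^j)))) (p := fun m => Mmat (Real.pi/4) j k m = c)
      rw [Finset.card_univ, Fintype.card_fin] at h
      have h2 : n1 + n2 = 2^j := h
      exact_mod_cast h2
    have hsum0 : (n1:ℝ) * c - (n2:ℝ) * c = 0 := by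
      have h := Hsum k hk
      rw [← Finset.sum_filter_add_sum_filter_not Finset.univ
        (fun m => Mmat (Real.pi/4) j k m = c)] at h
      rw [Finset.sum_congr rfl hmem, Finset.sum_congr rfl hmem'] at h
      rw [Finset.sum_const, Finset.sum_const, nsmul_eq_mul, nsmul_eq_mul] at h
      linarith [h]
    have hn12 : (n1:ℝ) = (n2:ℝ) := by
      have := hcpos
      nlinarith [hsum0]
    have h2n1 : 2 * (n1:ℝ) = (2:ℝ)^(j:ℕ) := by linarith [hnn, hn12]
    have ht : (n1:ℝ) * (a * c) = 1/(2*(j:ℝ)) := by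
      have h1 : 2 * ((n1:ℝ) * (a*c)) = (2:ℝ)^(j:ℕ) * (a*c) := by rw [← h2n1]; ring
      rw [hval] at h1
      rw [eq_div_iff (by positivity : (2*(j:ℝ)) ≠ 0)]
      rw [eq_div_iff (ne_of_gt hj0)] at h1
      linarith [h1]
    constructor
    · refine ⟨fun m => if m ∈ Sk then a else 0, ?_, ?_⟩
      · intro m
        rw [ha]
        by_cases hm : m ∈ Sk <;> simp [hm, abs_of_pos hapos, hapos.le]
      · rw [hmv]
        have e1 : (∑ m, (if m ∈ Sk then a else 0) * c) = (n1:ℝ) * (a * c) := by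
          rw [Finset.sum_congr rfl (fun m _ => by rw [ite_mul, zero_mul])]
          rw [Finset.sum_ite_mem, Finset.univ_inter, Finset.sum_const, nsmul_eq_mul]
        have e2 : (∑ m, Mmat (Real.pi/4) j k m * (if m ∈ Sk then a else 0))
            = (n1:ℝ) * (c * a) := by
          rw [Finset.sum_congr rfl (fun m _ => by rw [mul_ite, mul_zero])]
          rw [Finset.sum_ite_mem, Finset.univ_inter,
            Finset.sum_congr rfl (fun m hm => by rw [hmem m hm]),
            Finset.sum_const, nsmul_eq_mul]
        rw [e1, e2]
        have ht2 : (n1:ℝ) * (c * a) = 1/(2*(j:ℝ)) := by rw [← ht]; ring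
        rw [ht, ht2, abs_of_pos (by positivity)]
        field_simp
        ring
    · rintro y ⟨v, hv, rfl⟩
      simp only [ha] at hv
      rw [hmv]
      set p : ℝ := ∑ m ∈ Sk, v m with hp
      set q : ℝ := ∑ m ∈ Finset.univ.filter (fun m => ¬ Mmat (Real.pi/4) j k m = c), v m
        with hq
      have hsplit : (∑ m, v m) = p + q :=
        (Finset.sum_filter_add_sum_filter_not Finset.univ _ v).symm
      have htt : (∑ m, Mmat (Real.pi/4) j k m * v m) = c * p - c * q := by
        rw [← Finset.sum_filter_add_sum_filter_not Finset.univ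
          (fun m => Mmat (Real.pi/4) j k m = c) (fun m => Mmat (Real.pi/4) j k m * v m)]
        have e1 : ∑ m ∈ Finset.univ.filter (fun m => Mmat (Real.pi/4) j k m = c),
            Mmat (Real.pi/4) j k m * v m = c * p := by
          rw [hp, Finset.mul_sum]
          refine Finset.sum_congr rfl (fun m hm => ?_)
          rw [hmem m (by rw [hSk]; exact hm)]
        have e2 : ∑ m ∈ Finset.univ.filter (fun m => ¬ Mmat (Real.pi/4) j k m = c),
            Mmat (Real.pi/4) j k m * v m = -(c * q) := by
          rw [hq, Finset.mul_sum, ← Finset.sum_neg_distrib]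
          refine Finset.sum_congr rfl (fun m hm => ?_)
          rw [hmem' m hm]
          ring
        rw [e1, e2]
        ring
      rw [← Finset.sum_mul, hsplit, htt]
      have hpb : |p| ≤ (n1:ℝ) * a := by
        calc |p| ≤ ∑ m ∈ Sk, |v m| := Finset.abs_sum_le_sum_abs _ _
          _ ≤ ∑ _m ∈ Sk, a := Finset.sum_le_sum (fun m _ => hv m)
          _ = (n1:ℝ) * a := by rw [Finset.sum_const, nsmul_eq_mul]
      have hqb : |q| ≤ (n1:ℝ) * a := by
        calc |q| ≤ ∑ m ∈ Finset.univ.filter (fun m => ¬ Mmat (Real.pi/4) j k m = c), |v m| :=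
              Finset.abs_sum_le_sum_abs _ _
          _ ≤ ∑ _m ∈ Finset.univ.filter (fun m => ¬ Mmat (Real.pi/4) j k m = c), a :=
              Finset.sum_le_sum (fun m _ => hv m)
          _ = (n2:ℝ) * a := by rw [Finset.sum_const, nsmul_eq_mul]
          _ = (n1:ℝ) * a := by rw [hn12]
      have habs : |(p + q) * c * (c * p - c * q)| = c * c * |p^2 - q^2| := by
        rw [show (p + q) * c * (c * p - c * q) = (c*c) * (p^2 - q^2) by ring]
        rw [abs_mul, abs_of_pos (by positivity : (0:ℝ) < c*c)]
      rw [habs]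
      have hK : |p^2 - q^2| ≤ ((n1:ℝ)*a)^2 := by
        have h1 : p^2 ≤ ((n1:ℝ)*a)^2 := by nlinarith [abs_nonneg p, sq_abs p, hpb]
        have h2 : q^2 ≤ ((n1:ℝ)*a)^2 := by nlinarith [abs_nonneg q, sq_abs q, hqb]
        rw [abs_le]
        constructor <;> nlinarith [sq_nonneg p, sq_nonneg q]
      have hfin : c * c * ((n1:ℝ)*a)^2 = 1/(4*(j:ℝ)^2) := by
        have h1 : c * c * ((n1:ℝ)*a)^2 = ((n1:ℝ)*(a*c))^2 := by ring
        rw [h1, ht, div_pow]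
        congr 1
        · norm_num
        · ring
      calc c * c * |p^2 - q^2| ≤ c * c * ((n1:ℝ)*a)^2 :=
            mul_le_mul_of_nonneg_left hK (by positivity)
        _ = 1/(4*(j:ℝ)^2) := hfin
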